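/- arXiv:0906.4678 — 5 statements merged into one kernel-verified Lean document; each statement's English description precedes it below -/
import Mathlib

section
/- If f : ℝ → ℂ is integrable and causal (f(t) = 0 for all t < 0), then its Fourier transform F(ω) = (1/√(2π)) ∫ exp(iωt) f(t) dt extends holomorphically to the upper-half complex plane {z : Im z > 0}. -/
open MeasureTheory Complex Real

open Filter Metric

lemma key_norm (z : ℂ) (t : ℝ) :
    ‖Complex.exp (Complex.I * z * t)‖ = Real.exp (-z.im * t) := by
  rw [Complex.norm_exp]
  congr 1
  simp [Complex.mul_re, Complex.mul_im]

lemma meas_aux (f : ℝ → ℂ) (hf : Integrable f) (z : ℂ) :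
    AEStronglyMeasurable (fun t : ℝ => Complex.exp (Complex.I * z * t) * f t) volume :=
  ((Complex.continuous_exp.comp (by continuity)).aestronglyMeasurable).mul
    hf.aestronglyMeasurable

lemma bound_aux (f : ℝ → ℂ) (hcausal : ∀ t : ℝ, t < 0 → f t = 0) (z : ℂ)
    (hz : 0 ≤ z.im) (t : ℝ) :
    ‖Complex.exp (Complex.I * z * t) * f t‖ ≤ ‖f t‖ := by
  rcases lt_or_ge t 0 with ht | ht
  · simp [hcausal t ht]
  · rw [norm_mul, key_norm]
    have : Real.exp (-z.im * t) ≤ 1 := by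
      rw [Real.exp_le_one_iff]
      nlinarith
    nlinarith [norm_nonneg (f t)]

lemma t_exp_bound (a t : ℝ) (ha : 0 < a) (_ht : 0 ≤ t) :
    t * Real.exp (-(a * t)) ≤ 1 / a := by
  rw [Real.exp_neg, mul_inv_le_iff₀ (Real.exp_pos _)]
  have h : a * t ≤ Real.exp (a * t) := by
    nlinarith [Real.add_one_le_exp (a * t)]
  rw [div_mul_eq_mul_div, le_div_iff₀ ha]
  nlinarith

/-- If `f : ℝ → ℂ` is integrable and causal (`f t = 0` for `t < 0`), then its Fourier
transform `F ω = (1/√(2π)) ∫ exp(iωt) f t dt` extends holomorphically to the upper half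
plane: the function `z ↦ (1/√(2π)) ∫ exp(izt) f t dt` (which agrees with `F` on `ℝ`) is
holomorphic on `{z | 0 < Im z}` and continuous on `{z | 0 ≤ Im z}`. -/
theorem stmt0 (f : ℝ → ℂ) (hf : Integrable f) (hcausal : ∀ t : ℝ, t < 0 → f t = 0) :
    DifferentiableOn ℂ
      (fun z : ℂ => ((1 / Real.sqrt (2 * π) : ℝ) : ℂ) *
        ∫ t : ℝ, Complex.exp (Complex.I * z * (t : ℂ)) * f t)
      {z : ℂ | 0 < z.im} ∧
    ContinuousOn
      (fun z : ℂ => ((1 / Real.sqrt (2 * π) : ℝ) : ℂ) *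
        ∫ t : ℝ, Complex.exp (Complex.I * z * (t : ℂ)) * f t)
      {z : ℂ | 0 ≤ z.im} := by
  have hmeas := meas_aux f hf
  have hint : ∀ z : ℂ, 0 ≤ z.im →
      Integrable (fun t : ℝ => Complex.exp (Complex.I * z * t) * f t) := by
    intro z hz
    exact hf.norm.mono' (hmeas z) (Filter.Eventually.of_forall (bound_aux f hcausal z hz))
  constructor
  · -- Differentiability
    intro z₀ hz₀
    simp only [Set.mem_setOf_eq] at hz₀
    apply DifferentiableAt.differentiableWithinAt
    apply DifferentiableAt.const_mul
    set a : ℝ := z₀.im / 2 with ha_def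
    have ha : 0 < a := by positivity
    have key := hasDerivAt_integral_of_dominated_loc_of_deriv_le
      (F := fun z t => Complex.exp (Complex.I * z * (t : ℂ)) * f t)
      (F' := fun (z : ℂ) (t : ℝ) =>
        Complex.exp (Complex.I * z * (t : ℂ)) * (Complex.I * t) * f t)
      (x₀ := z₀) (bound := fun t => (1 / a) * ‖f t‖) (s := ball z₀ a)
      (ball_mem_nhds z₀ ha)
      (Filter.Eventually.of_forall fun z => hmeas z)
      (hint z₀ (le_of_lt hz₀))
      (((Complex.continuous_exp.comp (by continuity)).mul
        (by continuity)).aestronglyMeasurable.mul hf.aestronglyMeasurable)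
      ?_ (hf.norm.const_mul _) ?_
    · exact key.2.differentiableAt
    · -- bound on the derivative
      apply Filter.Eventually.of_forall
      intro t z hzball
      have him : a ≤ z.im := by
        have h1 : |(z - z₀).im| ≤ ‖z - z₀‖ := Complex.abs_im_le_norm _
        have h2 : ‖z - z₀‖ < a := by
          rwa [mem_ball, Complex.dist_eq] at hzball
        have h3 := abs_lt.1 (lt_of_le_of_lt h1 h2)
        rw [Complex.sub_im] at h3
        rw [ha_def] at *
        linarith [h3.1]
      show ‖Complex.exp (Complex.I * z * (t : ℂ)) * (Complex.I * t) * f t‖ ≤ (1 / a) * ‖f t‖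
      rcases lt_or_ge t 0 with ht | ht
      · rw [hcausal t ht]
        simp
      · rw [norm_mul, norm_mul, key_norm, norm_mul, Complex.norm_I, one_mul,
          Complex.norm_real, Real.norm_eq_abs, _root_.abs_of_nonneg ht]
        have h1 : Real.exp (-z.im * t) * t ≤ 1 / a := by
          have h2 : Real.exp (-z.im * t) ≤ Real.exp (-(a * t)) := by
            apply Real.exp_le_exp.2; nlinarith
          calc Real.exp (-z.im * t) * t ≤ Real.exp (-(a*t)) * t := by nlinarith
            _ = t * Real.exp (-(a*t)) := by ring
            _ ≤ 1 / a := t_exp_bound a t ha ht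
        nlinarith [norm_nonneg (f t), Real.exp_pos (-z.im * t),
          mul_le_mul_of_nonneg_right h1 (norm_nonneg (f t))]
    · -- differentiability of the integrand
      apply Filter.Eventually.of_forall
      intro t z hz
      have h1 : HasDerivAt (fun z : ℂ => Complex.I * z * t) (Complex.I * t) z := by
        simpa using ((hasDerivAt_id z).const_mul Complex.I).mul_const (t : ℂ)
      have h2 := (h1.cexp).mul_const (f t)
      simpa [mul_comm, mul_assoc, mul_left_comm] using h2
  · -- Continuity
    refine ContinuousOn.mul continuousOn_const ?_
    intro z₀ hz₀
    simp only [Set.mem_setOf_eq] at hz₀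
    have : Tendsto (fun z : ℂ => ∫ t : ℝ, Complex.exp (Complex.I * z * (t : ℂ)) * f t)
        (nhdsWithin z₀ {z : ℂ | 0 ≤ z.im})
        (nhds (∫ t : ℝ, Complex.exp (Complex.I * z₀ * (t : ℂ)) * f t)) := by
      apply tendsto_integral_filter_of_dominated_convergence (fun t => ‖f t‖)
      · exact Filter.Eventually.of_forall fun z => hmeas z
      · filter_upwards [self_mem_nhdsWithin] with z hz
        exact Filter.Eventually.of_forall (bound_aux f hcausal z hz)
      · exact hf.norm
      · apply Filter.Eventually.of_forall
        intro t
        have hc : Continuous fun z : ℂ => Complex.exp (Complex.I * z * (t : ℂ)) * f t := by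
          continuity
        exact (hc.tendsto z₀).mono_left nhdsWithin_le_nhds
    exact this
end

section
/- The function K_{T^{1/2}}(t) = H(t) · e^{-t/τ₀} / (Γ(1/2) · τ₀^{1/2} · t^{1/2}) (with H the Heaviside function and τ₀ > 0) has Fourier transform (1/√(2π)) ∫_ℝ e^{iωt} K_{T^{1/2}}(t) dt equal to (1/√(2π)) · (1 - iωτ₀)^{-1/2}, where the principal square root branch is used. -/
open MeasureTheory Complex Real

lemma aux_mul_cpow {r : ℝ} (hr : 0 < r) {w : ℂ} (hw : w ≠ 0) (c : ℂ) :
    ((r : ℂ) * w) ^ c = (r : ℂ) ^ c * w ^ c := by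
  have hr' : (r : ℂ) ≠ 0 := Complex.ofReal_ne_zero.mpr hr.ne'
  rw [Complex.cpow_def_of_ne_zero (mul_ne_zero hr' hw),
    Complex.cpow_def_of_ne_zero hr', Complex.cpow_def_of_ne_zero hw,
    Complex.log_ofReal_mul hr hw, add_mul, Complex.exp_add,
    Complex.ofReal_log hr.le]

/-- The relaxation kernel `K(t) = H(t) e^{-t/τ₀} / (Γ(1/2) τ₀^{1/2} t^{1/2})` has Fourier
transform `(1/√(2π)) ∫ e^{iωt} K(t) dt = (1/√(2π)) (1 - iωτ₀)^{-1/2}` (principal branch). -/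
theorem stmt3 (τ₀ : ℝ) (hτ : 0 < τ₀) (ω : ℝ) :
    ((1 / Real.sqrt (2 * π) : ℝ) : ℂ) *
      ∫ t : ℝ, Complex.exp (Complex.I * (ω : ℂ) * (t : ℂ)) *
        (if 0 < t then
          ((Real.exp (-t / τ₀) / (Real.Gamma (1/2) * Real.sqrt τ₀ * Real.sqrt t) : ℝ) : ℂ)
         else 0)
    = ((1 / Real.sqrt (2 * π) : ℝ) : ℂ) *
        (1 - Complex.I * (ω : ℂ) * (τ₀ : ℂ)) ^ (-(1/2 : ℂ)) := by
  set z : ℂ := (1/τ₀ : ℝ) - Complex.I * ω with hz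
  have hzre : 0 < z.re := by simp [hz]; positivity
  have hzne : z ≠ 0 := by intro h; rw [h] at hzre; simp at hzre
  congr 1
  -- step 1: restrict to Ioi 0
  have h1 : (∫ t : ℝ, Complex.exp (Complex.I * (ω : ℂ) * (t : ℂ)) *
        (if 0 < t then
          ((Real.exp (-t / τ₀) / (Real.Gamma (1/2) * Real.sqrt τ₀ * Real.sqrt t) : ℝ) : ℂ)
         else 0))
      = ∫ t in Set.Ioi (0:ℝ),
          ((1 / (Real.sqrt π * Real.sqrt τ₀) : ℝ) : ℂ) *
            (Complex.exp (-(z * t)) / (Real.sqrt t : ℂ)) := by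
    rw [← integral_indicator measurableSet_Ioi]
    congr 1
    funext t
    by_cases ht : 0 < t
    · rw [Set.indicator_of_mem (Set.mem_Ioi.mpr ht), if_pos ht]
      rw [Real.Gamma_one_half_eq]
      have : Complex.exp (Complex.I * (ω : ℂ) * (t : ℂ)) * Complex.exp (-((t:ℂ)/τ₀))
          = Complex.exp (-(z * t)) := by
        rw [← Complex.exp_add]; congr 1
        push_cast [hz]
        field_simp
        ring
      have hsπ : (Real.sqrt π : ℂ) ≠ 0 :=
        Complex.ofReal_ne_zero.mpr (Real.sqrt_ne_zero'.mpr Real.pi_pos)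
      have hsτ : (Real.sqrt τ₀ : ℂ) ≠ 0 :=
        Complex.ofReal_ne_zero.mpr (Real.sqrt_ne_zero'.mpr hτ)
      have hst : (Real.sqrt t : ℂ) ≠ 0 :=
        Complex.ofReal_ne_zero.mpr (Real.sqrt_ne_zero'.mpr ht)
      push_cast
      rw [← this]
      field_simp
    · rw [Set.indicator_of_notMem (by simpa using ht), if_neg ht, mul_zero]
  rw [h1, integral_const_mul]
  -- step 2: substitution t = u^2
  have h2 : (∫ t in Set.Ioi (0:ℝ), Complex.exp (-(z * t)) / (Real.sqrt t : ℂ))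
      = ∫ u in Set.Ioi (0:ℝ), 2 * Complex.exp (-z * (u:ℂ)^2) := by
    rw [← integral_comp_rpow_Ioi_of_pos
      (g := fun t : ℝ => Complex.exp (-(z * t)) / (Real.sqrt t : ℂ)) two_pos]
    refine setIntegral_congr_fun measurableSet_Ioi (fun x hx => ?_)
    rw [Set.mem_Ioi] at hx
    have hx2 : x ^ (2:ℝ) = x ^ 2 := by
      rw [show (2:ℝ) = ((2:ℕ):ℝ) by norm_num, Real.rpow_natCast]
    rw [hx2, Real.sqrt_sq hx.le]
    have : x ^ ((2:ℝ) - 1) = x := by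
      norm_num
    rw [this, real_smul]
    have hxc : (x : ℂ) ≠ 0 := Complex.ofReal_ne_zero.mpr hx.ne'
    push_cast
    rw [neg_mul z]
    field_simp
  rw [h2, integral_const_mul, integral_gaussian_complex_Ioi (by simpa using hzre)]
  have hfact : (1:ℂ) - Complex.I * ω * τ₀ = (τ₀:ℂ) * z := by
    rw [hz]; push_cast
    rw [mul_sub, mul_one_div,
      div_self (show (τ₀:ℂ) ≠ 0 from Complex.ofReal_ne_zero.mpr hτ.ne')]
    ring
  have harg : z.arg ≠ π := by
    intro h
    rw [Complex.arg_eq_pi_iff] at h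
    linarith [h.1]
  have hπhalf : (π:ℂ) ^ (1/2:ℂ) = ((Real.sqrt π : ℝ):ℂ) := by
    rw [Real.sqrt_eq_rpow, Complex.ofReal_cpow Real.pi_pos.le]; norm_num
  have hτhalf : (τ₀:ℂ) ^ (-(1/2):ℂ) = (((Real.sqrt τ₀)⁻¹ : ℝ):ℂ) := by
    rw [show (-(1/2:ℂ)) = ((-(1/2):ℝ):ℂ) by norm_num, ← Complex.ofReal_cpow hτ.le,
      Real.rpow_neg hτ.le, Real.sqrt_eq_rpow]
  have hsπ : (Real.sqrt π : ℂ) ≠ 0 :=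
    Complex.ofReal_ne_zero.mpr (Real.sqrt_ne_zero'.mpr Real.pi_pos)
  have hsτ : (Real.sqrt τ₀ : ℂ) ≠ 0 :=
    Complex.ofReal_ne_zero.mpr (Real.sqrt_ne_zero'.mpr hτ)
  rw [hfact, aux_mul_cpow hτ hzne, div_eq_mul_inv (π:ℂ) z,
    aux_mul_cpow Real.pi_pos (inv_ne_zero hzne), Complex.inv_cpow _ _ harg,
    hπhalf, hτhalf, Complex.cpow_neg]
  push_cast
  have hzp : z ^ (1/2 : ℂ) ≠ 0 := by
    intro h
    exact hzne ((Complex.cpow_eq_zero_iff _ _).mp h).1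
  field_simp
end

section
/- Let τ₀ > 0, c₀ > 0, α₁ ≥ 0 and define α_*^c(ω) = -α₁·iω / (c₀·√(1 - τ₀ iω)) with principal square root. Then Re(α_*^c(ω)) ≥ 0 for all ω ∈ ℝ, and Re(α_*^c(ω)) = Re(α_*(ω)) where α_*(ω) = iω/c₀ - iω/(c₀√(1 - τ₀ iω)) is the thermo-viscous attenuation coefficient. -/
open MeasureTheory Complex Real

/-- For `τ₀ > 0`, `c₀ > 0`, `α₁ ≥ 0` and the causal attenuation coefficient
`α_*^c(ω) = -α₁ iω/(c₀ √(1-τ₀iω))` (principal square root), `Re(α_*^c(ω)) ≥ 0` for all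
real `ω`; and (for `α₁ = 1`) `Re(α_*^c) = Re(α_*)`, where
`α_*(ω) = iω/c₀ - iω/(c₀√(1-τ₀iω))` is the thermo-viscous attenuation coefficient. -/
theorem stmt9 (τ₀ c₀ α₁ : ℝ) (hτ : 0 < τ₀) (hc : 0 < c₀) (hα : 0 ≤ α₁) :
    (∀ ω : ℝ,
      0 ≤ ((-(α₁ : ℂ)) * Complex.I * (ω : ℂ) /
        ((c₀ : ℂ) * (1 - (τ₀ : ℂ) * Complex.I * (ω : ℂ)) ^ ((1/2 : ℂ)))).re) ∧
    (α₁ = 1 → ∀ ω : ℝ,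
      ((-(α₁ : ℂ)) * Complex.I * (ω : ℂ) /
        ((c₀ : ℂ) * (1 - (τ₀ : ℂ) * Complex.I * (ω : ℂ)) ^ ((1/2 : ℂ)))).re
      = (Complex.I * (ω : ℂ) / (c₀ : ℂ) -
         Complex.I * (ω : ℂ) /
           ((c₀ : ℂ) * (1 - (τ₀ : ℂ) * Complex.I * (ω : ℂ)) ^ ((1/2 : ℂ)))).re) := by
  have h2 : (1/2 : ℂ) = (2⁻¹ : ℂ) := by norm_num
  constructor
  · intro ω
    rw [h2]
    set z : ℂ := 1 - (τ₀ : ℂ) * Complex.I * (ω : ℂ) with hz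
    set w : ℂ := z ^ (2⁻¹ : ℂ) with hw
    have hzim : z.im = -(τ₀ * ω) := by simp [hz]
    have hsign : 0 ≤ -ω * w.im := by
      rcases lt_trichotomy ω 0 with h | h | h
      · have : 0 ≤ z.im := by rw [hzim]; nlinarith
        have := Complex.cpow_inv_two_im_eq_sqrt this
        rw [← hw] at this
        rw [this]
        have := Real.sqrt_nonneg ((‖z‖ - z.re)/2)
        nlinarith
      · simp [h]
      · have : z.im < 0 := by rw [hzim]; nlinarith
        have := Complex.cpow_inv_two_im_eq_neg_sqrt this
        rw [← hw] at this
        rw [this]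
        have := Real.sqrt_nonneg ((‖z‖ - z.re)/2)
        nlinarith
    rw [Complex.div_re]
    simp only [Complex.mul_re, Complex.mul_im, Complex.normSq_mul, Complex.neg_re,
      Complex.neg_im, Complex.ofReal_re, Complex.ofReal_im, Complex.I_re, Complex.I_im]
    have hns : 0 ≤ Complex.normSq w := Complex.normSq_nonneg w
    have hnsc : 0 ≤ Complex.normSq (c₀ : ℂ) := Complex.normSq_nonneg _
    have key : 0 ≤ α₁ * (-ω * w.im) := mul_nonneg hα hsign
    have hd : 0 ≤ Complex.normSq (c₀:ℂ) * Complex.normSq w := mul_nonneg hnsc hns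
    rw [← add_div]
    apply div_nonneg _ hd
    nlinarith [mul_nonneg hc.le key]
  · intro h1 ω
    subst h1
    rw [h2]
    simp [Complex.sub_re, Complex.div_re, Complex.mul_re, Complex.mul_im, Complex.normSq_mul]
    ring
end

section
/- Let γ ∈ (1,2], τ₀ > 0, α₁ > 0, c₀ > 0, and α_*(ω) = -α₁ iω / (c₀ √(1 + (-iτ₀ω)^{γ-1})) with principal branches. Then Re(α_*(ω)) / |ω|^γ → α₁ · τ₀^{γ-1} · sin(π(γ-1)/2) / (2c₀) as ω → 0⁺; i.e., for small ω, α(ω) ∼ α₀ |τ₀ ω|^γ with α₀ = α₁ sin(π(γ-1)/2)/(2τ₀ c₀). -/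
open MeasureTheory Complex Real Filter

/-- For `γ ∈ (1,2]`, `τ₀ > 0`, `α₁ > 0`, `c₀ > 0` and
`α_*(ω) = -α₁ iω/(c₀ √(1 + (-iτ₀ω)^{γ-1}))` (principal branches),
`Re(α_*(ω))/|ω|^γ → α₁ τ₀^{γ-1} sin(π(γ-1)/2)/(2c₀)` as `ω → 0⁺`: for small frequencies
the attenuation law is a frequency power law with exponent `γ`. -/
theorem stmt11 (γ τ₀ α₁ c₀ : ℝ) (hγ1 : 1 < γ) (hγ2 : γ ≤ 2) (hτ : 0 < τ₀) (hα : 0 < α₁)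
    (hc : 0 < c₀) :
    Tendsto
      (fun ω : ℝ =>
        (((-(α₁ : ℂ)) * Complex.I * (ω : ℂ) /
          ((c₀ : ℂ) *
            (1 + (-(Complex.I * (τ₀ : ℂ) * (ω : ℂ))) ^ (((γ - 1 : ℝ)) : ℂ)) ^ ((1/2 : ℂ)))).re)
          / |ω| ^ γ)
      (nhdsWithin 0 (Set.Ioi 0))
      (nhds (α₁ * τ₀ ^ (γ - 1) * Real.sin (π * (γ - 1) / 2) / (2 * c₀))) := by
  have hγ0 : 0 < γ - 1 := by linarith
  set θ : ℝ := π * (γ - 1) / 2 with hθdef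
  have hπ := Real.pi_pos
  have hθpos : 0 < θ := by positivity
  have hθlt : θ < π := by rw [hθdef]; nlinarith
  have hsin : 0 < Real.sin θ := Real.sin_pos_of_pos_of_lt_pi hθpos hθlt
  set c : ℂ := Complex.exp ((-θ : ℝ) * Complex.I) with hcdef
  have hcim : c.im = -Real.sin θ := by
    rw [hcdef, Complex.exp_ofReal_mul_I_im, Real.sin_neg]
  set W : ℝ → ℂ := fun r => (1 + (r : ℂ) * c) ^ (1/2 : ℂ) with hWdef
  have hW0 : W 0 = 1 := by simp [hWdef]
  have hWderiv : HasDerivAt W (c / 2) 0 := by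
    have h1 : HasDerivAt (fun z : ℂ => (1 + z * c) ^ (1/2 : ℂ))
        ((1/2 : ℂ) * (1 + (0:ℂ) * c) ^ ((1/2 : ℂ) - 1) * c) 0 := by
      have hl : HasDerivAt (fun z : ℂ => 1 + z * c) c 0 := by
        simpa using ((hasDerivAt_id (0:ℂ)).mul_const c).const_add 1
      exact hl.cpow_const (by simp [Complex.slitPlane])
    have h2 := h1.comp_ofReal (z := 0)
    convert h2 using 1
    simp only [zero_mul, add_zero, Complex.one_cpow]
    ring
  have hslope : Tendsto (slope W 0) (nhdsWithin 0 (Set.Ioi 0)) (nhds (c / 2)) :=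
    (hasDerivAt_iff_tendsto_slope.mp hWderiv).mono_left
      (nhdsWithin_mono 0 (fun x hx => ne_of_gt hx))
  have hA : Tendsto (fun r : ℝ => (W r).im / r) (nhdsWithin 0 (Set.Ioi 0))
      (nhds (-Real.sin θ / 2)) := by
    have h1 : Tendsto (fun r : ℝ => (slope W 0 r).im) (nhdsWithin 0 (Set.Ioi 0))
        (nhds ((c / 2).im)) := (Complex.continuous_im.tendsto _).comp hslope
    have h2 : (c / 2).im = -Real.sin θ / 2 := by
      have : (c / 2).im = c.im / 2 := by simp [Complex.div_im, Complex.normSq]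
      rw [this, hcim]
    rw [h2] at h1
    refine h1.congr' ?_
    filter_upwards [self_mem_nhdsWithin] with r hr
    have hr0 : r ≠ 0 := ne_of_gt hr
    have hs : slope W 0 r = (r : ℝ)⁻¹ • (W r - 1) := by
      rw [slope_def_module, hW0]; ring_nf
    rw [hs, Complex.smul_im]
    simp [Complex.sub_im, div_eq_inv_mul]
  have hWcont : ContinuousAt W 0 := by
    have hbase : ContinuousAt (fun r : ℝ => 1 + (r:ℂ) * c) 0 := by fun_prop
    have hmem : (1 + ((0:ℝ):ℂ) * c) ∈ Complex.slitPlane := by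
      simp [Complex.slitPlane]
    exact ContinuousAt.comp (g := fun z : ℂ => z ^ (1/2 : ℂ))
      (f := fun r : ℝ => 1 + (r:ℂ) * c) (continuousAt_cpow_const hmem) hbase
  have hB : Tendsto (fun r : ℝ => Complex.normSq (W r)) (nhdsWithin 0 (Set.Ioi 0)) (nhds 1) := by
    have h1 := (Complex.continuous_normSq.continuousAt.comp hWcont).tendsto
    simp only [Function.comp_def, hW0, map_one] at h1
    exact h1.mono_left nhdsWithin_le_nhds
  -- the auxiliary real function
  set h : ℝ → ℝ := fun r => (-α₁ * τ₀ ^ (γ - 1) / c₀) * ((W r).im / r) / Complex.normSq (W r)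
    with hhdef
  have hh : Tendsto h (nhdsWithin 0 (Set.Ioi 0))
      (nhds (α₁ * τ₀ ^ (γ - 1) * Real.sin θ / (2 * c₀))) := by
    have := ((hA.const_mul (-α₁ * τ₀ ^ (γ - 1) / c₀)).div hB one_ne_zero)
    convert this using 2
    · rfl
    ring
  -- the substitution map
  have hrmap : Tendsto (fun ω : ℝ => (τ₀ * ω) ^ (γ - 1)) (nhdsWithin 0 (Set.Ioi 0))
      (nhdsWithin 0 (Set.Ioi 0)) := by
    rw [tendsto_nhdsWithin_iff]
    constructor
    · have h1 : ContinuousAt (fun x : ℝ => x ^ (γ - 1)) 0 :=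
        Real.continuousAt_rpow_const 0 (γ - 1) (Or.inr (le_of_lt hγ0))
      have hm : ContinuousAt (fun ω : ℝ => τ₀ * ω) 0 := by fun_prop
      have h1' : ContinuousAt (fun x : ℝ => x ^ (γ - 1)) ((fun ω : ℝ => τ₀ * ω) 0) := by
        simpa using h1
      have h2 : ContinuousAt (fun ω : ℝ => (τ₀ * ω) ^ (γ - 1)) 0 :=
        h1'.comp hm
      have := h2.tendsto.mono_left (nhdsWithin_le_nhds (s := Set.Ioi 0))
      simpa [Real.zero_rpow (ne_of_gt hγ0)] using this
    · filter_upwards [self_mem_nhdsWithin] with ω hω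
      exact Real.rpow_pos_of_pos (mul_pos hτ hω) _
  -- key pointwise identity
  have hkey : ∀ ω : ℝ, 0 < ω →
      (((-(α₁ : ℂ)) * Complex.I * (ω : ℂ) /
          ((c₀ : ℂ) *
            (1 + (-(Complex.I * (τ₀ : ℂ) * (ω : ℂ))) ^ (((γ - 1 : ℝ)) : ℂ)) ^ ((1/2 : ℂ)))).re)
          / |ω| ^ γ = h ((τ₀ * ω) ^ (γ - 1)) := by
    intro ω hω
    have hτω : 0 < τ₀ * ω := mul_pos hτ hω
    -- step a : the cpow rewrite
    have ha : (-(Complex.I * (τ₀ : ℂ) * (ω : ℂ))) ^ (((γ - 1 : ℝ)) : ℂ)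
        = (((τ₀ * ω) ^ (γ - 1) : ℝ) : ℂ) * c := by
      have hz : (-(Complex.I * (τ₀ : ℂ) * (ω : ℂ))) = ((τ₀ * ω : ℝ) : ℂ) * (-Complex.I) := by
        push_cast; ring
      have hne : ((τ₀ * ω : ℝ) : ℂ) * (-Complex.I) ≠ 0 :=
        mul_ne_zero (by exact_mod_cast ne_of_gt hτω) (neg_ne_zero.mpr Complex.I_ne_zero)
      rw [hz, Complex.cpow_def_of_ne_zero hne]
      have hlog : Complex.log (((τ₀ * ω : ℝ) : ℂ) * (-Complex.I))
          = (Real.log (τ₀ * ω) : ℂ) + (-(π/2) : ℝ) * Complex.I := by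
        rw [Complex.log]
        congr 1
        · congr 1
          rw [norm_mul, Complex.norm_of_nonneg hτω.le]
          simp
        · rw [Complex.arg_real_mul _ hτω, Complex.arg_neg_I]
      rw [hlog]
      rw [hcdef]
      rw [Real.rpow_def_of_pos hτω, Complex.ofReal_exp, ← Complex.exp_add]
      congr 1
      rw [hθdef]
      push_cast
      ring
    rw [ha]
    -- now the real-part computation
    set r : ℝ := (τ₀ * ω) ^ (γ - 1) with hrdef
    have hr : 0 < r := Real.rpow_pos_of_pos hτω _
    have hwne : W r ≠ 0 := by
      rw [hWdef]
      simp only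
      rw [Ne, Complex.cpow_eq_zero_iff]
      rintro ⟨h1, -⟩
      have : (1 + (r:ℂ) * c).im = 0 := by rw [h1]; simp
      simp [Complex.add_im, Complex.mul_im, hcim] at this
      rcases this with h | h
      · exact ne_of_gt hr h
      · exact ne_of_gt hsin (by linarith [h])
    have hns : Complex.normSq (W r) ≠ 0 := by
      exact ne_of_gt (Complex.normSq_pos.mpr hwne)
    have habs : |ω| = ω := abs_of_pos hω
    have hωγ : ω ^ γ = ω ^ (γ - 1) * ω := by
      rw [← Real.rpow_add_one (ne_of_gt hω)]
      ring_nf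
    have hrsplit : r = τ₀ ^ (γ - 1) * ω ^ (γ - 1) :=
      Real.mul_rpow (le_of_lt hτ) (le_of_lt hω)
    rw [habs, hhdef]
    simp only
    rw [Complex.div_re]
    have hden_re : ((c₀ : ℂ) * W r).re = c₀ * (W r).re := by
      simp [Complex.mul_re]
    have hden_im : ((c₀ : ℂ) * W r).im = c₀ * (W r).im := by
      simp [Complex.mul_im]
    have hns' : Complex.normSq ((c₀ : ℂ) * W r) = c₀ ^ 2 * Complex.normSq (W r) := by
      rw [map_mul, Complex.normSq_ofReal]; ring
    have hnum_re : ((-(α₁ : ℂ)) * Complex.I * (ω : ℂ)).re = 0 := by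
      simp [Complex.mul_re, Complex.mul_im]
    have hnum_im : ((-(α₁ : ℂ)) * Complex.I * (ω : ℂ)).im = -α₁ * ω := by
      simp [Complex.mul_re, Complex.mul_im]
    rw [hden_re, hden_im, hns', hnum_re, hnum_im, hωγ, hrsplit]
    have hω1 : ω ^ (γ - 1) ≠ 0 := ne_of_gt (Real.rpow_pos_of_pos hω _)
    have hτ1 : τ₀ ^ (γ - 1) ≠ 0 := ne_of_gt (Real.rpow_pos_of_pos hτ _)
    rw [hrsplit] at hns
    field_simp
    ring
  -- conclude
  have hcomp := hh.comp hrmap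
  refine hcomp.congr' ?_
  filter_upwards [self_mem_nhdsWithin] with ω hω
  exact (hkey ω hω).symm
end

section
/- For the principal-branch function ω ↦ exp(-c·(-iω)^γ) with c > 0: if 0 < γ < 1 then this function is bounded on the closed upper half plane {Im z ≥ 0} (substituting ω ↦ z), whereas if 1 < γ < 2 it is unbounded on the upper half plane. In particular, for γ ∈ (1,2) the inverse Fourier transform of exp(-c(-iω)^γ) cannot be a causal function/distribution of exponential type. -/
open MeasureTheory Complex Real

/-- Real part of `w ^ γ` (principal branch) for `w ≠ 0` and real `γ`. -/
lemma re_cpow_real_aux (w : ℂ) (hw : w ≠ 0) (γ : ℝ) :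
    (w ^ ((γ : ℝ) : ℂ)).re = ‖w‖ ^ γ * Real.cos (γ * w.arg) := by
  rw [Complex.cpow_def_of_ne_zero hw, Complex.exp_re]
  have h1 : (Complex.log w * (γ : ℂ)).re = Real.log ‖w‖ * γ := by
    simp [Complex.mul_re, Complex.log_re, Complex.log_im]
  have h2 : (Complex.log w * (γ : ℂ)).im = w.arg * γ := by
    simp [Complex.mul_im, Complex.log_re, Complex.log_im]
  rw [h1, h2, Real.rpow_def_of_pos (norm_pos_iff.mpr hw), mul_comm w.arg γ]

/-- For `c > 0` and the principal-branch function `z ↦ exp(-c(-iz)^γ)`: if `0 < γ < 1`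
it is bounded on the closed upper half plane, whereas if `1 < γ < 2` it is unbounded on
the (open) upper half plane. -/
theorem stmt17 (c γ : ℝ) (hc : 0 < c) :
    ((0 < γ ∧ γ < 1) → ∃ C : ℝ, ∀ z : ℂ, 0 ≤ z.im →
      ‖Complex.exp (-((c : ℂ) * (-(Complex.I * z)) ^ ((γ : ℝ) : ℂ)))‖ ≤ C) ∧
    ((1 < γ ∧ γ < 2) → ∀ C : ℝ, ∃ z : ℂ, 0 < z.im ∧
      C < ‖Complex.exp (-((c : ℂ) * (-(Complex.I * z)) ^ ((γ : ℝ) : ℂ)))‖) := by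
  have pi_pos := Real.pi_pos
  constructor
  · rintro ⟨hγ0, hγ1⟩
    refine ⟨1, fun z hz => ?_⟩
    set w : ℂ := -(Complex.I * z) with hwdef
    have hre : 0 ≤ (-((c : ℂ) * w ^ ((γ : ℝ) : ℂ))).re → True := fun _ => trivial
    have hwre : w.re = z.im := by simp [hwdef]
    by_cases hw : w = 0
    · rw [hw, Complex.zero_cpow (by exact_mod_cast hγ0.ne' : ((γ : ℝ) : ℂ) ≠ 0)]
      simp
    · have hrecpow : 0 ≤ (w ^ ((γ : ℝ) : ℂ)).re := by
        rw [re_cpow_real_aux w hw γ]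
        have harg : |w.arg| ≤ π / 2 := by
          rw [Complex.abs_arg_le_pi_div_two_iff, hwre]; exact hz
        have hcos : 0 ≤ Real.cos (γ * w.arg) := by
          apply Real.cos_nonneg_of_mem_Icc
          constructor
          · have : γ * w.arg ≥ -(π/2) := by
              have h1 : |γ * w.arg| ≤ π / 2 := by
                rw [abs_mul, abs_of_pos hγ0]
                calc γ * |w.arg| ≤ 1 * (π/2) := by
                      apply mul_le_mul hγ1.le harg (abs_nonneg _) zero_le_one
                  _ = π / 2 := one_mul _
              linarith [neg_abs_le (γ * w.arg)]
            linarith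
          · have h1 : |γ * w.arg| ≤ π / 2 := by
              rw [abs_mul, abs_of_pos hγ0]
              calc γ * |w.arg| ≤ 1 * (π/2) := by
                    apply mul_le_mul hγ1.le harg (abs_nonneg _) zero_le_one
                _ = π / 2 := one_mul _
            linarith [le_abs_self (γ * w.arg)]
        positivity
      rw [Complex.norm_exp]
      have : (-((c : ℂ) * w ^ ((γ : ℝ) : ℂ))).re = -(c * (w ^ ((γ : ℝ) : ℂ)).re) := by
        simp [Complex.mul_re]
      rw [this]
      calc Real.exp (-(c * (w ^ ((γ : ℝ) : ℂ)).re)) ≤ Real.exp 0 := by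
            apply Real.exp_le_exp.mpr
            have : 0 ≤ c * (w ^ ((γ : ℝ) : ℂ)).re := mul_nonneg hc.le hrecpow
            linarith
        _ = 1 := Real.exp_zero
  · rintro ⟨hγ1, hγ2⟩ C
    have hγ0 : 0 < γ := lt_trans one_pos hγ1
    set φ : ℝ := (π / (2 * γ) + π / 2) / 2 with hφdef
    have hφlb : π / (2 * γ) < φ := by
      rw [hφdef]
      have : π / (2 * γ) < π / 2 := by
        apply div_lt_div_of_pos_left pi_pos (by norm_num) (by linarith)
      linarith
    have hφub : φ < π / 2 := by
      rw [hφdef]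
      have : π / (2 * γ) < π / 2 := by
        apply div_lt_div_of_pos_left pi_pos (by norm_num) (by linarith)
      linarith
    have hφpos : 0 < φ := lt_trans (by positivity) hφlb
    have hγφ1 : π / 2 < γ * φ := by
      have := (div_lt_iff₀ (by positivity : (0:ℝ) < 2 * γ)).mp hφlb
      nlinarith
    have hγφ2 : γ * φ < π := by
      have : γ * φ < 2 * (π / 2) := by
        have := mul_lt_mul_of_pos_left hφub hγ0
        nlinarith
      linarith
    have hcos : Real.cos (γ * φ) < 0 :=
      Real.cos_neg_of_pi_div_two_lt_of_lt hγφ1 (by linarith)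
    set k : ℝ := -Real.cos (γ * φ) with hkdef
    have hk : 0 < k := by rw [hkdef]; linarith
    set T : ℝ := (|C| + 1) / (c * k) with hTdef
    have hT : 0 < T := by positivity
    set R : ℝ := T ^ γ⁻¹ with hRdef
    have hR : 0 < R := Real.rpow_pos_of_pos hT _
    have hRγ : R ^ γ = T := Real.rpow_inv_rpow hT.le hγ0.ne'
    set u : ℂ := (Real.log R : ℂ) + (φ : ℂ) * Complex.I with hudef
    have hure : u.re = Real.log R := by simp [hudef]
    have huim : u.im = φ := by simp [hudef]
    refine ⟨Complex.I * Complex.exp u, ?_, ?_⟩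
    · have : (Complex.I * Complex.exp u).im = (Complex.exp u).re := by
        simp [Complex.mul_im]
      rw [this, Complex.exp_re, hure, huim, Real.exp_log hR]
      have hcosφ : 0 < Real.cos φ := Real.cos_pos_of_mem_Ioo ⟨by linarith, hφub⟩
      positivity
    · have hw : -(Complex.I * (Complex.I * Complex.exp u)) = Complex.exp u := by
        rw [← mul_assoc, Complex.I_mul_I]; ring
      rw [hw]
      have hlog : Complex.log (Complex.exp u) = u :=
        Complex.log_exp (by rw [huim]; linarith) (by rw [huim]; linarith)
      have hcpow : Complex.exp u ^ ((γ : ℝ) : ℂ) = Complex.exp (u * (γ : ℂ)) := by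
        rw [Complex.cpow_def_of_ne_zero (Complex.exp_ne_zero u), hlog]
      rw [hcpow]
      have hre : (Complex.exp (u * (γ : ℂ))).re = R ^ γ * Real.cos (γ * φ) := by
        rw [Complex.exp_re]
        have h1 : (u * (γ : ℂ)).re = Real.log R * γ := by
          simp [Complex.mul_re, hure, huim]
        have h2 : (u * (γ : ℂ)).im = γ * φ := by
          simp [Complex.mul_im, hure, huim]; ring
        rw [h1, h2, ← Real.rpow_def_of_pos hR]
      rw [Complex.norm_exp]
      have hrecomp : (-((c : ℂ) * Complex.exp (u * (γ : ℂ)))).re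
          = -(c * (Complex.exp (u * (γ : ℂ))).re) := by
        simp [Complex.mul_re]
      rw [hrecomp, hre, hRγ]
      have hval : -(c * (T * Real.cos (γ * φ))) = |C| + 1 := by
        have h1 : -(c * (T * Real.cos (γ * φ))) = T * (c * k) := by
          rw [hkdef]; ring
        rw [h1, hTdef,
          div_mul_cancel₀ _ (ne_of_gt (by positivity : (0:ℝ) < c * k))]
      rw [hval]
      have := Real.add_one_le_exp (|C| + 1)
      have hC : C ≤ |C| := le_abs_self C
      linarith
end
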